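/- Let C ⊆ (ℤ/4)ⁿ be a ℤ/4-linear code that is self-dual with respect to the pairing x·y = Σᵢ xᵢyᵢ mod 4. Define A(C) = (1/2){λ ∈ ℤⁿ : λ mod 4 ∈ C} ⊆ ℝⁿ (Construction A₄). Then A(C) is a unimodular lattice; and if moreover every codeword of C has Euclidean weight divisible by 8, then A(C) is an even lattice. -/
import Mathlib

/-- Euclidean weight of an element of `ℤ/4`: `0,1,2,3 ↦ 0,1,4,1`. -/
def euclWt (a : ZMod 4) : ℕ :=
  match a.val with
  | 0 => 0
  | 1 => 1
  | 2 => 4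
  | _ => 1

/-- Construction A₄ lattice `A(C) = (1/2){λ ∈ ℤⁿ : λ mod 4 ∈ C} ⊆ ℝⁿ` of a
`ℤ/4`-linear code `C`. -/
def latOfZ4Code (n : ℕ) (C : Submodule (ZMod 4) (Fin n → ZMod 4)) :
    Set (Fin n → ℝ) :=
  {v | ∃ l : Fin n → ℤ, (fun i => (l i : ZMod 4)) ∈ C ∧
    v = fun i => (l i : ℝ) / 2}

lemma dot_int {n : ℕ} (k l : Fin n → ℤ)
    (h : ∑ i, ((k i : ZMod 4)) * ((l i : ZMod 4)) = 0) :
    (4:ℤ) ∣ ∑ i, k i * l i := by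
  have : ((∑ i, k i * l i : ℤ) : ZMod 4) = 0 := by push_cast; exact h
  exact (ZMod.intCast_zmod_eq_zero_iff_dvd _ 4).mp this

lemma sum_half {n : ℕ} (k l : Fin n → ℤ) :
    ∑ i, ((k i : ℝ)/2) * ((l i : ℝ)/2) = ((∑ i, k i * l i : ℤ) : ℝ)/4 := by
  push_cast
  rw [Finset.sum_div]
  congr 1; ext i; ring

lemma sq_mod8 (l : ℤ) : (8:ℤ) ∣ l^2 - (euclWt ((l : ZMod 4)) : ℤ) := by
  have h0 : (0:ℤ) ≤ l % 4 := Int.emod_nonneg l (by norm_num)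
  have h1 : l % 4 < 4 := Int.emod_lt_of_pos l (by norm_num)
  obtain ⟨q, hq⟩ : ∃ q, l = 4*q + l % 4 := ⟨l / 4, by omega⟩
  have hc : (l : ZMod 4) = ((l % 4 : ℤ) : ZMod 4) := by
    rw [ZMod.intCast_eq_intCast_iff]
    exact (Int.emod_emod_of_dvd _ dvd_rfl).symm
  interval_cases h : l % 4
  · have he : euclWt ((l : ZMod 4)) = 0 := by rw [hc]; decide
    rw [he, hq]; exact ⟨2*q^2, by push_cast; ring⟩
  · have he : euclWt ((l : ZMod 4)) = 1 := by rw [hc]; decide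
    rw [he, hq]; exact ⟨2*q^2 + q, by push_cast; ring⟩
  · have he : euclWt ((l : ZMod 4)) = 4 := by rw [hc]; decide
    rw [he, hq]; exact ⟨2*q^2 + 2*q, by push_cast; ring⟩
  · have he : euclWt ((l : ZMod 4)) = 1 := by rw [hc]; decide
    rw [he, hq]; exact ⟨2*q^2 + 3*q + 1, by push_cast; ring⟩

/-- If `C ⊆ (ℤ/4)ⁿ` is self-dual for the mod-4 dot product, then `A(C)` is a
unimodular lattice (integral and equal to its dual); if moreover every codeword
has Euclidean weight divisible by 8, then `A(C)` is an even lattice. -/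
theorem stmt_13 (n : ℕ) (C : Submodule (ZMod 4) (Fin n → ZMod 4))
    (hsd : ∀ x : Fin n → ZMod 4, x ∈ C ↔ ∀ y ∈ C, ∑ i, x i * y i = 0) :
    (∀ u ∈ latOfZ4Code n C, ∀ v ∈ latOfZ4Code n C, ∃ m : ℤ,
        ∑ i, u i * v i = (m : ℝ)) ∧
    (latOfZ4Code n C =
      {w : Fin n → ℝ | ∀ v ∈ latOfZ4Code n C, ∃ m : ℤ,
        ∑ i, v i * w i = (m : ℝ)}) ∧
    ((∀ x ∈ C, 8 ∣ ∑ i, euclWt (x i)) →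
      ∀ v ∈ latOfZ4Code n C, ∃ m : ℤ, ∑ i, v i * v i = 2 * (m : ℝ)) := by
  have hint : ∀ u ∈ latOfZ4Code n C, ∀ v ∈ latOfZ4Code n C, ∃ m : ℤ,
      ∑ i, u i * v i = (m : ℝ) := by
    rintro u ⟨k, hk, rfl⟩ v ⟨l, hl, rfl⟩
    have h4 : (4:ℤ) ∣ ∑ i, k i * l i := by
      apply dot_int
      exact (hsd _).mp hk _ hl
    obtain ⟨m, hm⟩ := h4
    refine ⟨m, ?_⟩
    rw [sum_half, hm]
    push_cast; ring
  refine ⟨hint, ?_, ?_⟩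
  · ext w
    simp only [Set.mem_setOf_eq]
    constructor
    · intro hw v hv; exact hint v hv w hw
    · intro hw
      have hcoord : ∀ i, ∃ m : ℤ, w i = (m : ℝ) / 2 := by
        intro i
        have hv : (fun j => ((if j = i then (4:ℤ) else 0 : ℤ) : ℝ) / 2) ∈ latOfZ4Code n C := by
          refine ⟨fun j => if j = i then 4 else 0, ?_, rfl⟩
          have : (fun j => (((if j = i then (4:ℤ) else 0) : ℤ) : ZMod 4)) = 0 := by
            funext j; by_cases hji : j = i <;> simp [hji]; decide
          rw [this]; exact C.zero_mem
        obtain ⟨m, hm⟩ := hw _ hv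
        refine ⟨m, ?_⟩
        rw [Finset.sum_eq_single i] at hm
        · simp at hm; linarith
        · intro b _ hb; simp [hb]
        · simp
      choose l hl using hcoord
      refine ⟨l, ?_, funext hl⟩
      rw [hsd]
      intro y hy
      set k : Fin n → ℤ := fun i => ((y i).val : ℤ) with hkdef
      have hky : (fun i => ((k i : ZMod 4))) = y := by
        funext i; simp [hkdef, ZMod.natCast_val, ZMod.cast_id]
      have hvL : (fun i => ((k i : ℝ)) / 2) ∈ latOfZ4Code n C :=
        ⟨k, by rw [hky]; exact hy, rfl⟩
      obtain ⟨m, hm⟩ := hw _ hvL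
      have hsum : ∑ i, ((k i : ℝ)/2) * ((l i : ℝ)/2) = (m : ℝ) := by
        rw [← hm]; congr 1; ext i; rw [hl i]
      rw [sum_half] at hsum
      have h4 : (∑ i, k i * l i) = m * 4 := by
        have h := (div_eq_iff (by norm_num : (4:ℝ) ≠ 0)).mp hsum
        exact_mod_cast h
      have hz : ((∑ i, k i * l i : ℤ) : ZMod 4) = 0 := by
        rw [h4]; push_cast
        rw [show ((4:ZMod 4)) = 0 by decide]; ring
      have hcast : ∑ i, ((l i : ZMod 4)) * ((k i : ZMod 4))
          = ((∑ i, k i * l i : ℤ) : ZMod 4) := by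
        push_cast; exact Finset.sum_congr rfl fun i _ => mul_comm _ _
      rw [← hky]
      show ∑ i, ((l i : ZMod 4)) * ((k i : ZMod 4)) = 0
      rw [hcast, hz]
  · rintro heven v ⟨l, hl, rfl⟩
    have h8 : (8:ℤ) ∣ ∑ i, (l i)^2 := by
      have h1 : (8:ℤ) ∣ ∑ i, ((l i)^2 - (euclWt ((l i : ZMod 4)) : ℤ)) :=
        Finset.dvd_sum (fun i _ => sq_mod8 (l i))
      have h2 : (8:ℤ) ∣ ∑ i, (euclWt ((l i : ZMod 4)) : ℤ) := by
        have h := heven _ hl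
        rw [show (∑ i, ((euclWt ((l i : ZMod 4)) : ℤ)))
            = ((∑ i, euclWt ((l i : ZMod 4)) : ℕ) : ℤ) by push_cast; rfl]
        exact_mod_cast h
      rw [Finset.sum_sub_distrib] at h1
      omega
    obtain ⟨m, hm⟩ := h8
    refine ⟨m, ?_⟩
    rw [sum_half]
    have hsq : ∑ i, l i * l i = ∑ i, (l i)^2 := by
      exact Finset.sum_congr rfl fun i _ => (sq (l i)).symm
    rw [hsq, hm]
    push_cast; ring
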